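/- For 3 ≤ r ≤ 8 and any twisted cubic C in Λ_r, the number of exceptional classes E with ⟨C, E⟩ = 0 is exactly r; equivalently, the number of pairs (Q, E) with Q a conic, E an exceptional class, and Q + E = C is exactly r. -/

import Mathlib

/-- The intersection pairing on the Picard lattice `Λ_r = ℤ^(r+1)`:
`⟨x, y⟩ = x₀y₀ − x₁y₁ − ⋯ − x_r y_r`. -/
def pair {r : ℕ} (x y : Fin (r + 1) → ℤ) : ℤ :=
  x 0 * y 0 - ∑ i : Fin r, x i.succ * y i.succ

/-- The canonical class `K_r = (−3, 1, …, 1)`. -/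
def Kc (r : ℕ) : Fin (r + 1) → ℤ := fun i => if i = 0 then -3 else 1

/-- Exceptional classes (classes of `(−1)`-curves). -/
def Exceptional {r : ℕ} (E : Fin (r + 1) → ℤ) : Prop :=
  pair E E = -1 ∧ pair (Kc r) E = -1

/-- Nef classes: nonnegative pairing with every exceptional class. -/
def Nef {r : ℕ} (D : Fin (r + 1) → ℤ) : Prop :=
  ∀ E : Fin (r + 1) → ℤ, Exceptional E → 0 ≤ pair D E

/-- Conics: nef classes `Q` with `⟨Q,Q⟩ = 0` and `⟨K,Q⟩ = −2`. -/
def Conic {r : ℕ} (Q : Fin (r + 1) → ℤ) : Prop :=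
  Nef Q ∧ pair Q Q = 0 ∧ pair (Kc r) Q = -2

/-- Twisted cubics: nef classes `C` with `⟨C,C⟩ = 1` and `⟨K,C⟩ = −3`. -/
def TwistedCubic {r : ℕ} (C : Fin (r + 1) → ℤ) : Prop :=
  Nef C ∧ pair C C = 1 ∧ pair (Kc r) C = -3

abbrev MM (r : ℕ) := Fin (r + 1) → ℤ

section PairLemmas
variable {r : ℕ}

lemma pair_comm (x y : MM r) : pair x y = pair y x := by
  simp only [pair, mul_comm]

lemma pair_add_left (x y z : MM r) : pair (x + y) z = pair x z + pair y z := by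
  simp only [pair, Pi.add_apply, add_mul, Finset.sum_add_distrib]; ring

lemma pair_smul_left (c : ℤ) (x z : MM r) : pair (c • x) z = c * pair x z := by
  simp only [pair, Pi.smul_apply, smul_eq_mul, mul_assoc, ← Finset.mul_sum]; ring

lemma pair_add_right (x y z : MM r) : pair z (x + y) = pair z x + pair z y := by
  rw [pair_comm, pair_add_left, pair_comm x z, pair_comm y z]

lemma pair_smul_right (c : ℤ) (x z : MM r) : pair z (c • x) = c * pair z x := by
  rw [pair_comm, pair_smul_left, pair_comm]

lemma pair_sub_left (x y z : MM r) : pair (x - y) z = pair x z - pair y z := by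
  have := pair_add_left (x - y) y z; rw [sub_add_cancel] at this; linarith

lemma pair_sub_right (x y z : MM r) : pair z (x - y) = pair z x - pair z y := by
  rw [pair_comm, pair_sub_left, pair_comm x z, pair_comm y z]

end PairLemmas

def lvec (r : ℕ) : MM r := fun l => if l = 0 then 1 else 0
def uvec {r : ℕ} (t : Fin (r + 1)) : MM r := fun l => if l = t then 1 else 0


lemma pair_lvec_left (x : MM r) : pair (lvec r) x = x 0 := by
  simp [pair, lvec, Fin.succ_ne_zero]

lemma pair_uvec_left (t : Fin r) (x : MM r) : pair (uvec t.succ) x = -(x t.succ) := by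
  simp [pair, uvec, (Fin.succ_ne_zero t).symm, Fin.succ_inj]

lemma pair_K_lvec : pair (Kc r) (lvec r) = -3 := by
  simp [pair, Kc, lvec, Fin.succ_ne_zero]

lemma pair_K_uvec (t : Fin r) : pair (Kc r) (uvec t.succ) = -1 := by
  simp [pair, Kc, uvec, (Fin.succ_ne_zero t).symm, Fin.succ_inj, Fin.succ_ne_zero]

lemma pair_K_K : pair (Kc r) (Kc r) = 9 - r := by
  simp [pair, Kc, Fin.succ_ne_zero]

lemma consec_nonneg (z : ℤ) : 0 ≤ z * (z - 1) := by
  rcases le_or_gt z 0 with h | h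
  · have := mul_nonneg (neg_nonneg.2 h) (by linarith : (0:ℤ) ≤ 1 - z); nlinarith [this]
  · exact mul_nonneg h.le (by omega)

lemma self_le_sq (z : ℤ) : z ≤ z ^ 2 := by nlinarith [consec_nonneg z]

/-- Cauchy–Schwarz specialization over a finset. -/
lemma cauchy_sq (s : Finset (Fin r)) (f : Fin r → ℤ) :
    (∑ i ∈ s, f i) ^ 2 ≤ (s.card : ℤ) * ∑ i ∈ s, f i ^ 2 :=
  sq_sum_le_card_mul_sum_sq

lemma lemA {a : ℤ} {m : Fin r → ℤ} (hr : r ≤ 8)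
    (hs : ∑ i, m i = 3 * a - 3) (hq : ∑ i, (m i) ^ 2 = a ^ 2 - 1) : 1 ≤ a := by
  have hc := cauchy_sq Finset.univ m
  rw [hs, hq] at hc
  have hcard : ((Finset.univ : Finset (Fin r)).card : ℤ) = r := by simp
  rw [hcard] at hc
  have hq0 : (0 : ℤ) ≤ a ^ 2 - 1 := by
    rw [← hq]; exact Finset.sum_nonneg fun i _ => sq_nonneg _
  have hr' : (r : ℤ) ≤ 8 := by exact_mod_cast hr
  nlinarith [mul_le_mul_of_nonneg_right hr' hq0]

lemma sum_erase_split {s : Finset (Fin r)} {i : Fin r} (h : i ∈ s) (f : Fin r → ℤ) :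
    ∑ l ∈ s.erase i, f l = (∑ l ∈ s, f l) - f i := by
  rw [← Finset.sum_erase_add s f h]; ring

lemma no_two_neg {a : ℤ} {m : Fin r → ℤ} (hr : r ≤ 8) (ha : 1 ≤ a)
    (hs : ∑ i, m i = 3 * a - 3) (hq : ∑ i, (m i) ^ 2 = a ^ 2 - 1)
    {i j : Fin r} (hij : i ≠ j) (hi : m i < 0) (hj : m j < 0) : False := by
  classical
  have hjmem : j ∈ Finset.univ.erase i := Finset.mem_erase.2 ⟨hij.symm, Finset.mem_univ j⟩
  set s : Finset (Fin r) := (Finset.univ.erase i).erase j with hsdef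
  have hss : ∑ l ∈ s, m l = 3 * a - 3 - m i - m j := by
    rw [hsdef, sum_erase_split hjmem, sum_erase_split (Finset.mem_univ i), hs]
  have hsq : ∑ l ∈ s, (m l) ^ 2 = a ^ 2 - 1 - (m i) ^ 2 - (m j) ^ 2 := by
    rw [hsdef, sum_erase_split hjmem, sum_erase_split (Finset.mem_univ i), hq]
  have hcard : (s.card : ℤ) ≤ 6 := by
    have : s.card = r - 2 := by
      rw [hsdef, Finset.card_erase_of_mem hjmem, Finset.card_erase_of_mem (Finset.mem_univ i)]
      simp; omega
    rw [this]; have : r - 2 ≤ 6 := by omega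
    exact_mod_cast this
  have hq0 : (0 : ℤ) ≤ ∑ l ∈ s, (m l) ^ 2 := Finset.sum_nonneg fun l _ => sq_nonneg _
  have hc := cauchy_sq s m
  have hc6 : (∑ l ∈ s, m l) ^ 2 ≤ 6 * ∑ l ∈ s, (m l) ^ 2 :=
    le_trans hc (mul_le_mul_of_nonneg_right hcard hq0)
  rw [hss, hsq] at hc6
  have hc1 : 1 ≤ -m i := by omega
  have hd1 : 1 ≤ -m j := by omega
  nlinarith [sq_nonneg (m i - m j), sq_nonneg (a - 1), mul_nonneg (by linarith : (0:ℤ) ≤ a - 1) (by linarith : (0:ℤ) ≤ -m i - m j - 2)]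

lemma lemN {a : ℤ} {m : Fin r → ℤ} (h3 : 3 ≤ r) (hr : r ≤ 8)
    (hs : ∑ i, m i = 3 * a - 3) (hq : ∑ i, (m i) ^ 2 = a ^ 2 - 1)
    (hodd : ¬(Odd a ∧ ∀ i, Odd (m i))) : ∀ i, 0 ≤ m i := by
  classical
  by_contra hcon
  push_neg at hcon
  obtain ⟨i, hi⟩ := hcon
  have ha : 1 ≤ a := lemA hr hs hq
  have hpos : ∀ j, j ≠ i → 0 ≤ m j := by
    intro j hji
    by_contra hj
    exact no_two_neg hr ha hs hq hji (by omega) hi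
  -- Cauchy over univ.erase i
  set s : Finset (Fin r) := Finset.univ.erase i with hsdef
  have hss : ∑ l ∈ s, m l = 3 * a - 3 - m i := by
    rw [hsdef, sum_erase_split (Finset.mem_univ i), hs]
  have hsq : ∑ l ∈ s, (m l) ^ 2 = a ^ 2 - 1 - (m i) ^ 2 := by
    rw [hsdef, sum_erase_split (Finset.mem_univ i), hq]
  have hcards : s.card = r - 1 := by
    rw [hsdef, Finset.card_erase_of_mem (Finset.mem_univ i)]; simp
  have hcard : (s.card : ℤ) ≤ 7 := by rw [hcards]; omega
  have hq0 : (0 : ℤ) ≤ ∑ l ∈ s, (m l) ^ 2 := Finset.sum_nonneg fun l _ => sq_nonneg _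
  have hc7 : (3 * a - 3 - m i) ^ 2 ≤ 7 * (a ^ 2 - 1 - (m i) ^ 2) := by
    have hc := le_trans (cauchy_sq s m) (mul_le_mul_of_nonneg_right hcard hq0)
    rw [hss, hsq] at hc
    exact hc
  have hc1 : 1 ≤ -m i := by omega
  -- derive m i = -1 and a = 3
  have hminei : m i = -1 := by
    by_contra hne
    have : 2 ≤ -m i := by omega
    nlinarith [consec_nonneg (a - 1), mul_nonneg (by linarith : (0:ℤ) ≤ a - 1) (by linarith : (0:ℤ) ≤ -m i - 2)]
  have ha3 : a = 3 := by nlinarith [sq_nonneg (a - 3)]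
  -- now the rest: ∑_{s} m = 7, ∑_{s} m² = 7, all entries nonneg ⇒ all ∈ {0,1}, seven ones
  rw [hminei, ha3] at hss hsq
  norm_num at hss hsq
  have hmem01 : ∀ l ∈ s, m l = 0 ∨ m l = 1 := by
    have hzero : ∑ l ∈ s, ((m l) ^ 2 - m l) = 0 := by rw [Finset.sum_sub_distrib, hss, hsq]; norm_num
    have hnn : ∀ l ∈ s, 0 ≤ (m l) ^ 2 - m l := fun l _ => by nlinarith [consec_nonneg (m l)]
    intro l hl
    have := (Finset.sum_eq_zero_iff_of_nonneg hnn).1 hzero l hl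
    have hml : m l * (m l - 1) = 0 := by nlinarith [this]
    rcases mul_eq_zero.1 hml with h | h
    · left; exact h
    · right; omega
  -- sum = 7 with entries ≤ 1 over r-1 ≤ 7 slots ⇒ r = 8 and all equal 1
  have hsum_le : (7 : ℤ) ≤ (s.card : ℤ) := by
    calc (7:ℤ) = ∑ l ∈ s, m l := hss.symm
    _ ≤ ∑ l ∈ s, 1 := Finset.sum_le_sum (fun l hl => by rcases hmem01 l hl with h | h <;> omega)
    _ = (s.card : ℤ) := by simp
  have hall1 : ∀ l ∈ s, m l = 1 := by
    intro l hl
    by_contra hne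
    have hl0 : m l = 0 := by rcases hmem01 l hl with h | h; exact h; exact absurd h hne
    have hlt : ∑ x ∈ s, m x < ∑ x ∈ s, (1:ℤ) := by
      refine Finset.sum_lt_sum (fun x hx => by rcases hmem01 x hx with h | h <;> omega)
        ⟨l, hl, by omega⟩
    rw [hss] at hlt
    have hcc : ∑ x ∈ s, (1:ℤ) = (s.card : ℤ) := by simp
    rw [hcc] at hlt
    omega
  -- contradiction with hodd: everything odd
  apply hodd
  constructor
  · rw [ha3]; exact ⟨1, by ring⟩
  · intro l
    by_cases hl : l = i
    · rw [hl, hminei]; exact ⟨-1, by ring⟩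
    · have : m l = 1 := hall1 l (Finset.mem_erase.2 ⟨hl, Finset.mem_univ l⟩)
      rw [this]; exact ⟨0, by ring⟩

lemma lemF1 {a : ℤ} {m : Fin r → ℤ} (h3 : 3 ≤ r) (hr : r ≤ 8)
    (hs : ∑ i, m i = 3 * a - 3) (hq : ∑ i, (m i) ^ 2 = a ^ 2 - 1)
    (h2 : 2 ≤ a) (hpos : ∀ i, 0 ≤ m i) :
    ∃ i j k : Fin r, j ≠ i ∧ k ≠ i ∧ k ≠ j ∧ a + 1 ≤ m i + m j + m k := by
  classical
  have hne1 : (Finset.univ : Finset (Fin r)).Nonempty := by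
    refine ⟨⟨0, by omega⟩, Finset.mem_univ _⟩
  obtain ⟨i, _, hmax1⟩ := Finset.exists_max_image Finset.univ m hne1
  have hcard1 : (Finset.univ.erase i).card = r - 1 := by
    rw [Finset.card_erase_of_mem (Finset.mem_univ i)]; simp
  have hne2 : (Finset.univ.erase i).Nonempty := by
    rw [← Finset.card_pos, hcard1]; omega
  obtain ⟨j, hjmem, hmax2⟩ := Finset.exists_max_image _ m hne2
  have hcard2 : ((Finset.univ.erase i).erase j).card = r - 2 := by
    rw [Finset.card_erase_of_mem hjmem, hcard1]; omega
  have hne3 : ((Finset.univ.erase i).erase j).Nonempty := by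
    rw [← Finset.card_pos, hcard2]; omega
  obtain ⟨k, hkmem, hmax3⟩ := Finset.exists_max_image _ m hne3
  have hji : j ≠ i := (Finset.mem_erase.1 hjmem).1
  have hkj : k ≠ j := (Finset.mem_erase.1 hkmem).1
  have hki : k ≠ i := (Finset.mem_erase.1 (Finset.mem_erase.1 hkmem).2).1
  refine ⟨i, j, k, hji, hki, hkj, ?_⟩
  by_contra hcon
  push_neg at hcon
  have hsum : m i + m j + m k ≤ a := by omega
  -- bounds p ≥ q ≥ t
  have hqp : m j ≤ m i := hmax1 j (Finset.mem_univ j)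
  have htq : m k ≤ m j := hmax2 k (Finset.mem_erase.1 hkmem).2
  -- the rest
  set U : Finset (Fin r) := ((Finset.univ.erase i).erase j).erase k with hU
  have hrest : ∀ l ∈ U, m l ≤ m k := fun l hl => hmax3 l (Finset.mem_erase.1 hl).2
  have hUcard : U.card = r - 3 := by rw [hU, Finset.card_erase_of_mem hkmem, hcard2]; omega
  have hSU : ∑ l ∈ U, m l = 3 * a - 3 - m i - m j - m k := by
    rw [hU, sum_erase_split hkmem, sum_erase_split hjmem,
      sum_erase_split (Finset.mem_univ i), hs]
  have hQU : ∑ l ∈ U, (m l) ^ 2 = a ^ 2 - 1 - (m i) ^ 2 - (m j) ^ 2 - (m k) ^ 2 := by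
    rw [hU, sum_erase_split hkmem, sum_erase_split hjmem,
      sum_erase_split (Finset.mem_univ i), hq]
  -- SU ≤ 5 * t
  have hU5 : ∑ l ∈ U, m l ≤ 5 * m k := by
    calc ∑ l ∈ U, m l ≤ ∑ l ∈ U, m k := Finset.sum_le_sum hrest
    _ = (U.card : ℤ) * m k := by rw [Finset.sum_const]; ring
    _ ≤ 5 * m k := by
      apply mul_le_mul_of_nonneg_right _ (hpos k)
      rw [hUcard]; omega
  -- t ≥ 1
  have ht1 : 1 ≤ m k := by
    rw [hSU] at hU5
    omega
  -- QU ≤ t * SU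
  have hQt : ∑ l ∈ U, (m l) ^ 2 ≤ m k * ∑ l ∈ U, m l := by
    rw [Finset.mul_sum]
    refine Finset.sum_le_sum (fun l hl => ?_)
    have := hrest l hl
    nlinarith [hpos l]
  rw [hSU, hQU] at hQt
  -- final contradiction
  have e1 : m i * m i ≤ (m i + m j - m k) * m i := by
    apply mul_le_mul_of_nonneg_right _ (hpos i); omega
  have e2 : m j * m j ≤ (m i + m j - m k) * m j := by
    apply mul_le_mul_of_nonneg_right _ (hpos j); omega
  have hA : 0 ≤ a - (m i + m j + m k) := by omega
  have hB : 0 ≤ a + (m i + m j + m k) - 4 * m k := by omega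
  have hC : 0 ≤ a - 3 * m k := by omega
  nlinarith [e1, e2, mul_nonneg hA hB, mul_nonneg (by omega : (0:ℤ) ≤ m k) hC]

section Descent

def IsIsom {r : ℕ} (w : MM r → MM r) : Prop :=
  (∀ x y, w (x + y) = w x + w y) ∧ (∀ x y, pair (w x) (w y) = pair x y) ∧ w (Kc r) = Kc r

lemma isom_comp {r : ℕ} {w1 w2 : MM r → MM r} (h1 : IsIsom w1) (h2 : IsIsom w2) :
    IsIsom (w1 ∘ w2) :=
  ⟨fun x y => by simp [h2.1 x y, h1.1], fun x y => by simp [h1.2.1, h2.2.1],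
   by simp [h2.2.2, h1.2.2]⟩

def cvec {r : ℕ} (i j k : Fin r) : MM r :=
  lvec r - uvec i.succ - uvec j.succ - uvec k.succ

lemma pair_cvec_right {r : ℕ} (i j k : Fin r) (x : MM r) :
    pair x (cvec i j k) = x 0 + x i.succ + x j.succ + x k.succ := by
  rw [cvec, pair_sub_right, pair_sub_right, pair_sub_right, pair_comm x (lvec r),
    pair_lvec_left, pair_comm x _, pair_uvec_left, pair_comm x _, pair_uvec_left,
    pair_comm x _, pair_uvec_left]
  ring

lemma cvec_zero {r : ℕ} (i j k : Fin r) : cvec i j k 0 = 1 := by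
  simp [cvec, lvec, uvec, (Fin.succ_ne_zero i).symm, (Fin.succ_ne_zero j).symm,
    (Fin.succ_ne_zero k).symm]

lemma cvec_succ {r : ℕ} (i j k t : Fin r) :
    cvec i j k t.succ = -(((if t = i then 1 else 0) : ℤ) + (if t = j then 1 else 0)
      + (if t = k then 1 else 0)) := by
  simp only [cvec, Pi.sub_apply, lvec, uvec, Fin.succ_ne_zero t, if_false, Fin.succ_inj]
  ring

lemma pair_cvec_cvec {r : ℕ} {i j k : Fin r} (hji : j ≠ i) (hki : k ≠ i) (hkj : k ≠ j) :
    pair (cvec i j k) (cvec i j k) = -2 := by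
  rw [pair_cvec_right, cvec_zero, cvec_succ, cvec_succ, cvec_succ]
  simp [hji, hki, hkj, hji.symm, hki.symm, hkj.symm]

lemma pair_K_cvec {r : ℕ} (i j k : Fin r) : pair (Kc r) (cvec i j k) = 0 := by
  rw [pair_cvec_right]
  simp [Kc, Fin.succ_ne_zero]

def crem {r : ℕ} (i j k : Fin r) (x : MM r) : MM r :=
  x + (pair x (cvec i j k)) • cvec i j k

lemma crem_isom {r : ℕ} {i j k : Fin r} (hji : j ≠ i) (hki : k ≠ i) (hkj : k ≠ j) :
    IsIsom (crem i j k) := by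
  refine ⟨fun x y => ?_, fun x y => ?_, ?_⟩
  · simp only [crem, pair_add_left, add_smul]; abel
  · simp only [crem, pair_add_left, pair_add_right, pair_smul_left, pair_smul_right,
      pair_cvec_cvec hji hki hkj, pair_comm (cvec i j k) y]
    ring
  · simp [crem, pair_K_cvec]

lemma crem_invol {r : ℕ} {i j k : Fin r} (hji : j ≠ i) (hki : k ≠ i) (hkj : k ≠ j) (x : MM r) :
    crem i j k (crem i j k x) = x := by
  simp only [crem, pair_add_left, pair_smul_left, pair_cvec_cvec hji hki hkj]
  module

end Descent

lemma inv_sums {r : ℕ} {D : MM r} (hDD : pair D D = 1) (hKD : pair (Kc r) D = -3) :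
    (∑ i : Fin r, (-(D i.succ)) = 3 * D 0 - 3) ∧
      (∑ i : Fin r, (-(D i.succ)) ^ 2 = (D 0) ^ 2 - 1) := by
  unfold pair at hDD
  unfold pair Kc at hKD
  simp only [if_pos rfl, if_true, Fin.succ_ne_zero, if_false, one_mul] at hKD
  norm_num at hKD
  constructor
  · rw [Finset.sum_neg_distrib]; linarith
  · have h1 : ∑ i : Fin r, (-(D i.succ)) ^ 2 = ∑ i : Fin r, D i.succ * D i.succ := by
      apply Finset.sum_congr rfl; intros; ring
    rw [h1]; nlinarith [hDD]

lemma descend {r : ℕ} (h3 : 3 ≤ r) (h8 : r ≤ 8) :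
    ∀ n : ℕ, ∀ D : MM r, (D 0).toNat ≤ n → pair D D = 1 → pair (Kc r) D = -3 →
      (¬ ∀ l, Odd (D l)) →
      ∃ w wi : MM r → MM r,
        IsIsom w ∧ (∀ x, wi (w x) = x) ∧ (∀ x, w (wi x) = x) ∧ w D = lvec r := by
  intro n
  induction n with
  | zero =>
    intro D h0 hDD hKD _
    have := lemA (m := fun i => -(D i.succ)) h8 (inv_sums hDD hKD).1 (inv_sums hDD hKD).2
    omega
  | succ n ih =>
    intro D h0 hDD hKD hodd
    obtain ⟨hs, hq⟩ := inv_sums hDD hKD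
    have ha1 : 1 ≤ D 0 := lemA h8 hs hq
    by_cases hDa : D 0 = 1
    · -- base: D = lvec
      have hz : ∀ i : Fin r, D i.succ = 0 := by
        have hq' : ∑ i : Fin r, (-(D i.succ)) ^ 2 = 0 := by rw [hq, hDa]; ring
        intro i
        have h2 := (Finset.sum_eq_zero_iff_of_nonneg
          (fun l _ => sq_nonneg (-(D l.succ)))).1 hq' i (Finset.mem_univ i)
        nlinarith [h2]
      refine ⟨id, id, ⟨fun _ _ => rfl, fun _ _ => rfl, rfl⟩, fun _ => rfl, fun _ => rfl, ?_⟩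
      funext l
      refine Fin.cases ?_ ?_ l
      · simpa [lvec] using hDa
      · intro t; simp [lvec, Fin.succ_ne_zero, hz t]
    · -- inductive step
      have ha2 : 2 ≤ D 0 := by omega
      have hallodd' : ¬(Odd (D 0) ∧ ∀ i : Fin r, Odd (-(D i.succ))) := by
        rintro ⟨hoa, hom⟩; apply hodd; intro l
        refine Fin.cases hoa (fun t => ?_) l
        simpa using (hom t)
      have hpos := lemN h3 h8 hs hq hallodd'
      obtain ⟨i, j, k, hji, hki, hkj, hsum⟩ := lemF1 h3 h8 hs hq ha2 hpos
      have hisom := crem_isom hji hki hkj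
      set D' := crem i j k D with hD'
      have hD'0 : D' 0 = D 0 + pair D (cvec i j k) := by
        simp [hD', crem, cvec_zero]
      have hcneg : pair D (cvec i j k) ≤ -1 := by
        rw [pair_cvec_right]
        have hsum' : D 0 + 1 ≤ -(D i.succ) + -(D j.succ) + -(D k.succ) := hsum
        linarith
      have hD'DD : pair D' D' = 1 := (hisom.2.1 D D).trans hDD
      have hD'KD : pair (Kc r) D' = -3 := by
        have h := hisom.2.1 (Kc r) D
        rw [hisom.2.2] at h
        exact h.trans hKD
      have hodd' : ¬ ∀ l, Odd (D' l) := by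
        intro hall'
        apply hodd
        have hDback : D = crem i j k D' := by rw [hD', crem_invol hji hki hkj]
        have hceven : Even (pair D' (cvec i j k)) := by
          rw [pair_cvec_right, show D' 0 + D' i.succ + D' j.succ + D' k.succ
            = (D' 0 + D' i.succ) + (D' j.succ + D' k.succ) by ring]
          exact ((hall' 0).add_odd (hall' i.succ)).add ((hall' j.succ).add_odd (hall' k.succ))
        intro l
        rw [hDback]
        have hcl : crem i j k D' l = D' l + (pair D' (cvec i j k)) * (cvec i j k l) := by
          simp [crem]
        rw [hcl]
        exact (hall' l).add_even (hceven.mul_right _)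
      have hD'a1 : 1 ≤ D' 0 :=
        lemA h8 (inv_sums hD'DD hD'KD).1 (inv_sums hD'DD hD'KD).2
      have hmeas : (D' 0).toNat ≤ n := by
        rw [hD'0] at hD'a1 ⊢
        omega
      obtain ⟨w2, wi2, hw2, hwi2a, hwi2b, hw2D⟩ := ih D' hmeas hD'DD hD'KD hodd'
      refine ⟨w2 ∘ crem i j k, crem i j k ∘ wi2, isom_comp hw2 hisom, ?_, ?_, ?_⟩
      · intro x
        simp only [Function.comp_apply]
        rw [hwi2a, crem_invol hji hki hkj]
      · intro x
        simp only [Function.comp_apply]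
        rw [crem_invol hji hki hkj, hwi2b]
      · simp only [Function.comp_apply, ← hD', hw2D]

lemma exc_sums {r : ℕ} {E : MM r} (hEE : pair E E = -1) (hKE : pair (Kc r) E = -1) :
    (∑ i : Fin r, E i.succ = 1 - 3 * E 0) ∧
      (∑ i : Fin r, (E i.succ) ^ 2 = (E 0) ^ 2 + 1) := by
  unfold pair at hEE
  unfold pair Kc at hKE
  simp only [if_pos rfl, if_true, Fin.succ_ne_zero, if_false, one_mul] at hKE
  norm_num at hKE
  constructor
  · linarith
  · have h1 : ∑ i : Fin r, (E i.succ) ^ 2 = ∑ i : Fin r, E i.succ * E i.succ := by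
      apply Finset.sum_congr rfl; intros; ring
    rw [h1]; nlinarith [hEE]

lemma pair_expand {r : ℕ} (x y : MM r) :
    pair (x + y) (x + y) = pair x x + 2 * pair x y + pair y y := by
  rw [pair_add_left, pair_add_right, pair_add_right, pair_comm y x]; ring

lemma odd_sq_mod8 (z : ℤ) (h : Odd z) : (8 : ℤ) ∣ z ^ 2 - 1 := by
  obtain ⟨k, rfl⟩ := h
  obtain ⟨t, ht⟩ := Int.even_mul_succ_self k
  exact ⟨t, by linear_combination 4 * ht⟩

lemma nef_not_allodd {r : ℕ} (h3 : 3 ≤ r) (h8 : r ≤ 8) {C : MM r}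
    (hC : TwistedCubic C) : ¬ ∀ l, Odd (C l) := by
  intro hall
  obtain ⟨hNef, hCC, hKC⟩ := hC
  obtain ⟨hs, hq⟩ := inv_sums hCC hKC
  have hdvd : (8 : ℤ) ∣ ((C 0) ^ 2 - 1) - r := by
    have h1 : ∑ i : Fin r, ((-(C i.succ)) ^ 2 - 1) = ((C 0) ^ 2 - 1) - r := by
      rw [Finset.sum_sub_distrib, hq]; simp
    rw [← h1]
    exact Finset.dvd_sum fun i _ => odd_sq_mod8 _ (by simpa using hall i.succ)
  have hdvd0 : (8 : ℤ) ∣ (C 0) ^ 2 - 1 := odd_sq_mod8 _ (hall 0)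
  have hr8 : (8 : ℤ) ∣ (r : ℤ) := by
    have := dvd_sub hdvd0 hdvd
    simpa using this
  have hr : r = 8 := by
    obtain ⟨t, ht⟩ := hr8
    omega
  have heven : ∀ l, Even (C l + Kc r l) := fun l => (hall l).add_odd (by
    unfold Kc; split <;> decide)
  set E : MM r := fun l => (C l + Kc r l) / 2 with hE
  have h2E : (2 : ℤ) • E = C + Kc r := by
    funext l
    simpa [hE, two_mul] using Int.ediv_mul_add_emod (C l + Kc r l) 2 ▸ (by
      rcases heven l with ⟨t, ht⟩
      simp [hE, ht]
      omega)
  have hKK : pair (Kc r) (Kc r) = 9 - r := pair_K_K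
  have hCK : pair C (Kc r) = -3 := (pair_comm C (Kc r)).trans hKC
  have hCpK : pair (C + Kc r) (C + Kc r) = -4 := by
    rw [pair_expand, hCC, hCK, hKK, hr]; norm_num
  have hEE : pair E E = -1 := by
    have h4 : (4 : ℤ) * pair E E = -4 := by
      rw [show (4:ℤ) * pair E E = 2 * (2 * pair E E) by ring, ← pair_smul_right,
        ← pair_smul_left, h2E, hCpK]
    linarith
  have hKE : pair (Kc r) E = -1 := by
    have h2 : (2 : ℤ) * pair (Kc r) E = -2 := by
      rw [← pair_smul_right, h2E, pair_add_right, hKC, hKK, hr]; norm_num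
    linarith
  have hCE : pair C E = -1 := by
    have h2 : (2 : ℤ) * pair C E = -2 := by
      rw [← pair_smul_right, h2E, pair_add_right, hCC, hCK]; norm_num
    linarith
  have := hNef E ⟨hEE, hKE⟩
  omega

lemma exc_zero_nonneg {r : ℕ} (h8 : r ≤ 8) {F : MM r} (hF : Exceptional F) : 0 ≤ F 0 := by
  obtain ⟨hs, hq⟩ := exc_sums hF.1 hF.2
  have hc := cauchy_sq Finset.univ (fun i => F i.succ)
  rw [hs, hq] at hc
  have hcard : ((Finset.univ : Finset (Fin r)).card : ℤ) = r := by simp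
  rw [hcard] at hc
  have hq0 : (0 : ℤ) ≤ (F 0) ^ 2 + 1 := by positivity
  have hr' : (r : ℤ) ≤ 8 := by exact_mod_cast h8
  have hc8 : (1 - 3 * F 0) ^ 2 ≤ 8 * ((F 0) ^ 2 + 1) :=
    le_trans hc (mul_le_mul_of_nonneg_right hr' hq0)
  have hA : ∑ i : Fin r, F i.succ ≤ ∑ i : Fin r, (F i.succ) ^ 2 :=
    Finset.sum_le_sum fun i _ => self_le_sq _
  rw [hs, hq] at hA
  by_contra hx
  push_neg at hx
  have hx1 : F 0 ≤ -1 := by omega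
  nlinarith [sq_nonneg (F 0 + 1)]

lemma nef_lvec_sub_uvec {r : ℕ} (h8 : r ≤ 8) (i0 : Fin r) :
    Nef (lvec r - uvec i0.succ) := by
  intro F hF
  rw [pair_sub_left, pair_lvec_left, pair_uvec_left]
  have hx0 : 0 ≤ F 0 := exc_zero_nonneg h8 hF
  obtain ⟨hs, hq⟩ := exc_sums hF.1 hF.2
  by_contra hcon
  push_neg at hcon
  have hy : F i0.succ ≤ -(F 0) - 1 := by omega
  set s : Finset (Fin r) := Finset.univ.erase i0 with hsdef
  have hss : ∑ l ∈ s, F l.succ = 1 - 3 * F 0 - F i0.succ := by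
    rw [hsdef, sum_erase_split (Finset.mem_univ i0) (fun l => F l.succ), hs]
  have hsq : ∑ l ∈ s, (F l.succ) ^ 2 = (F 0) ^ 2 + 1 - (F i0.succ) ^ 2 := by
    rw [hsdef, sum_erase_split (Finset.mem_univ i0) (fun l => (F l.succ) ^ 2), hq]
  have hcard : (s.card : ℤ) ≤ 7 := by
    rw [hsdef, Finset.card_erase_of_mem (Finset.mem_univ i0)]
    simp; omega
  have hq0 : (0 : ℤ) ≤ ∑ l ∈ s, (F l.succ) ^ 2 := Finset.sum_nonneg fun l _ => sq_nonneg _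
  have hc7 : (1 - 3 * F 0 - F i0.succ) ^ 2 ≤ 7 * ((F 0) ^ 2 + 1 - (F i0.succ) ^ 2) := by
    have hc := le_trans (cauchy_sq s (fun l => F l.succ))
      (mul_le_mul_of_nonneg_right hcard hq0)
    rw [hss, hsq] at hc
    exact hc
  have hy2 : (F 0 + 1) ^ 2 ≤ (F i0.succ) ^ 2 := by
    nlinarith [mul_nonneg (by linarith : (0:ℤ) ≤ -(F i0.succ + F 0 + 1))
      (by linarith : (0:ℤ) ≤ (F 0 + 1) - F i0.succ)]
  nlinarith [sq_nonneg (1 - 3 * F 0 - F i0.succ), hx0]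

lemma uvec_exceptional {r : ℕ} (i : Fin r) : Exceptional (uvec i.succ : MM r) := by
  constructor
  · rw [pair_uvec_left]; simp [uvec]
  · exact pair_K_uvec i

lemma lvec_orth_set {r : ℕ} :
    {E : MM r | Exceptional E ∧ pair (lvec r) E = 0}
      = Set.range (fun i : Fin r => (uvec i.succ : MM r)) := by
  classical
  ext E
  constructor
  · rintro ⟨⟨hEE, hKE⟩, hLE⟩
    rw [pair_lvec_left] at hLE
    obtain ⟨hs, hq⟩ := exc_sums hEE hKE
    rw [hLE] at hs hq
    norm_num at hs hq
    have h01 : ∀ i : Fin r, E i.succ = 0 ∨ E i.succ = 1 := by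
      have hzero : ∑ i : Fin r, ((E i.succ) ^ 2 - E i.succ) = 0 := by
        rw [Finset.sum_sub_distrib, hs, hq]; ring
      intro i
      have hterm := (Finset.sum_eq_zero_iff_of_nonneg
        (fun l _ => by nlinarith [consec_nonneg (E l.succ)])).1 hzero i (Finset.mem_univ i)
      have hmul : E i.succ * (E i.succ - 1) = 0 := by nlinarith [hterm]
      rcases mul_eq_zero.1 hmul with h | h
      · left; exact h
      · right; omega
    have hex : ∃ i : Fin r, E i.succ = 1 := by
      by_contra hno
      push_neg at hno
      have hzero : ∑ i : Fin r, E i.succ = 0 := Finset.sum_eq_zero (fun i _ => by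
        rcases h01 i with h | h
        · exact h
        · exact absurd h (hno i))
      rw [hzero] at hs
      norm_num at hs
    obtain ⟨i, hi⟩ := hex
    have huniq : ∀ j : Fin r, j ≠ i → E j.succ = 0 := by
      intro j hjne
      by_contra hj
      have hj1 : E j.succ = 1 := by
        rcases h01 j with h | h
        · exact absurd h hj
        · exact h
      have h1 : ∑ l : Fin r, E l.succ
          = E i.succ + ∑ l ∈ Finset.univ.erase i, E l.succ :=
        (Finset.add_sum_erase _ _ (Finset.mem_univ i)).symm
      have h2 : E j.succ ≤ ∑ l ∈ Finset.univ.erase i, E l.succ := by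
        simpa using Finset.single_le_sum (f := fun l : Fin r => E l.succ)
          (fun l _ => by show (0:ℤ) ≤ E l.succ; rcases h01 l with h | h <;> omega)
          (Finset.mem_erase.2 ⟨hjne, Finset.mem_univ j⟩)
      rw [hs] at h1
      omega
    refine ⟨i, ?_⟩
    funext l
    refine Fin.cases ?_ (fun t => ?_) l
    · simp [uvec, (Fin.succ_ne_zero i).symm, hLE]
    · by_cases hti : t = i
      · subst hti; simp [uvec, hi]
      · simp [uvec, Fin.succ_inj, hti, huniq t hti]
  · rintro ⟨i, rfl⟩
    refine ⟨uvec_exceptional i, ?_⟩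
    rw [pair_lvec_left]
    simp [uvec, (Fin.succ_ne_zero i).symm]

lemma uvec_inj {r : ℕ} : Function.Injective (fun i : Fin r => (uvec i.succ : MM r)) := by
  intro a b h
  by_cases hab : a = b
  · exact hab
  · exfalso
    have := congrFun h a.succ
    simp [uvec, Fin.succ_inj, hab] at this

lemma range_uvec_ncard {r : ℕ} :
    (Set.range (fun i : Fin r => (uvec i.succ : MM r))).ncard = r := by
  rw [← Set.image_univ, Set.ncard_image_of_injective _ uvec_inj, Set.ncard_univ]
  simp

/-- For `3 ≤ r ≤ 8` and a twisted cubic `C` in `Λ_r`, there are exactly `r`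
exceptional classes `E` with `⟨C, E⟩ = 0`; equivalently, exactly `r` pairs
`(Q, E)` with `Q` a conic, `E` exceptional and `Q + E = C`. -/
theorem twistedCubic_decompositions (r : ℕ) (h3 : 3 ≤ r) (h8 : r ≤ 8)
    (C : Fin (r + 1) → ℤ) (hC : TwistedCubic C) :
    {E : Fin (r + 1) → ℤ | Exceptional E ∧ pair C E = 0}.ncard = r ∧
    {p : (Fin (r + 1) → ℤ) × (Fin (r + 1) → ℤ) |
        Conic p.1 ∧ Exceptional p.2 ∧ p.1 + p.2 = C}.ncard = r := by

  classical
  obtain ⟨hNef, hCC, hKC⟩ := hC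
  have hodd := nef_not_allodd h3 h8 ⟨hNef, hCC, hKC⟩
  obtain ⟨w, wi, hw, hwiw, hwwi, hwC⟩ :=
    descend h3 h8 (C 0).toNat C le_rfl hCC hKC hodd
  obtain ⟨hwadd, hwpair, hwK⟩ := hw
  have hwiK : wi (Kc r) = Kc r := by conv_lhs => rw [← hwK, hwiw]
  have hwipair : ∀ x y, pair (wi x) (wi y) = pair x y := by
    intro x y
    have h := hwpair (wi x) (wi y)
    rw [hwwi, hwwi] at h
    exact h.symm
  have hexc_w : ∀ E : MM r, Exceptional E → Exceptional (w E) := by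
    intro E hE
    exact ⟨by rw [hwpair]; exact hE.1, by rw [← hwK, hwpair]; exact hE.2⟩
  have hexc_wi : ∀ E : MM r, Exceptional E → Exceptional (wi E) := by
    intro E hE
    exact ⟨by rw [hwipair]; exact hE.1, by rw [← hwiK, hwipair]; exact hE.2⟩
  have hwinj : Function.Injective wi := fun x y hxy => by
    rw [← hwwi x, hxy, hwwi]
  have hS_eq : {E : MM r | Exceptional E ∧ pair C E = 0}
      = wi '' {E : MM r | Exceptional E ∧ pair (lvec r) E = 0} := by
    ext E
    constructor
    · rintro ⟨hE, hCE⟩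
      exact ⟨w E, ⟨hexc_w E hE, by rw [← hwC, hwpair]; exact hCE⟩, hwiw E⟩
    · rintro ⟨F, ⟨hF, hLF⟩, rfl⟩
      refine ⟨hexc_wi F hF, ?_⟩
      have h := hwpair C (wi F)
      rw [hwwi, hwC] at h
      rw [← h]
      exact hLF
  have hS_ncard : {E : MM r | Exceptional E ∧ pair C E = 0}.ncard = r := by
    rw [hS_eq, Set.ncard_image_of_injective _ hwinj, lvec_orth_set, range_uvec_ncard]
  refine ⟨hS_ncard, ?_⟩
  -- second set
  have hwE_mem : ∀ E : MM r, Exceptional E → pair C E = 0 →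
      ∃ i0 : Fin r, w E = uvec i0.succ := by
    intro E hE hCE
    have hmem : w E ∈ {E : MM r | Exceptional E ∧ pair (lvec r) E = 0} :=
      ⟨hexc_w E hE, by rw [← hwC, hwpair]; exact hCE⟩
    rw [lvec_orth_set] at hmem
    obtain ⟨i0, hi0⟩ := hmem
    exact ⟨i0, hi0.symm⟩
  have hnefCE : ∀ E : MM r, Exceptional E → pair C E = 0 → Nef (C - E) := by
    intro E hE hCE
    obtain ⟨i0, hwE⟩ := hwE_mem E hE hCE
    have hwsub : w (C - E) = lvec r - uvec i0.succ := by
      have h := hwadd (C - E) E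
      rw [sub_add_cancel, hwC] at h
      rw [eq_sub_of_add_eq h.symm, hwE]
    intro F hF
    have h := nef_lvec_sub_uvec h8 i0 (w F) (hexc_w F hF)
    rw [← hwsub, hwpair] at h
    exact h
  have hT_eq : {p : MM r × MM r | Conic p.1 ∧ Exceptional p.2 ∧ p.1 + p.2 = C}
      = (fun E : MM r => (C - E, E)) '' {E : MM r | Exceptional E ∧ pair C E = 0} := by
    ext p
    constructor
    · rintro ⟨hQ, hE, hQE⟩
      have hpairQE : pair p.1 p.2 = 1 := by
        have h := pair_expand p.1 p.2
        rw [hQE, hCC, hQ.2.1, hE.1] at h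
        linarith
      have hCE : pair C p.2 = 0 := by
        rw [← hQE, pair_add_left, hpairQE, hE.1]
        ring
      refine ⟨p.2, ⟨hE, hCE⟩, ?_⟩
      have h1 : C - p.2 = p.1 := by rw [← hQE]; ring
      show (C - p.2, p.2) = p
      rw [h1]
    · rintro ⟨E, ⟨hE, hCE⟩, rfl⟩
      refine ⟨⟨hnefCE E hE hCE, ?_, ?_⟩, hE, by ring⟩
      · rw [pair_sub_left, pair_sub_right, pair_sub_right, hCC, hCE, pair_comm E C, hCE,
          hE.1]
        ring
      · rw [pair_sub_right, hKC, hE.2]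
        ring
  have hinj2 : Function.Injective (fun E : MM r => (C - E, E)) := by
    intro a b h
    exact congrArg Prod.snd h
  rw [hT_eq, Set.ncard_image_of_injective _ hinj2, hS_ncard]
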